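/- arXiv:2509.15444 — 2 statements merged into one kernel-verified Lean document; each statement's English description precedes it below -/
import Mathlib

section
/- Let p_1,…,p_m be arbitrarily dependent random variables in [0,1], let G be a subset of indices, and let T be any combining function such that P(T(p_G) ≤ x) ≤ x for all x ∈ [0,1]. Let β be a reshaping function β(r) = ∫_0^r x dν(x) for a probability measure ν on (0,∞). Then for any constant c > 0 and any function f:[0,1]^m → [0,∞), E[ 1{T(p_G) ≤ c·β(f(p))} / (c·f(p)) ] ≤ 1. -/
open MeasureTheory Finset
open scoped Classical

/-- Lemma D1(iii): for arbitrarily dependent p-values, a combining function `T` that is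
superuniform on the indices in `G`, a reshaping function `β(r) = ∫_{(0,r]} x dν(x)` for a
probability measure `ν` on `(0,∞)`, any `c > 0` and any nonnegative `f`,
`E[ 1{T(p_G) ≤ c·β(f(p))} / (c·f(p)) ] ≤ 1`. -/
theorem reshaped_super_lemma
    {Ω : Type*} [MeasurableSpace Ω] (μ : Measure Ω) [IsProbabilityMeasure μ]
    (m : ℕ) (p : Fin m → Ω → ℝ) (hmeas : ∀ i, Measurable (p i))
    (hrange : ∀ i ω, p i ω ∈ Set.Icc (0:ℝ) 1)
    (G : Finset (Fin m))
    (T : (Fin m → ℝ) → ℝ)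
    (hT_dep : ∀ v₁ v₂ : Fin m → ℝ, (∀ i ∈ G, v₁ i = v₂ i) → T v₁ = T v₂)
    (hT_super : ∀ x ∈ Set.Icc (0:ℝ) 1,
        μ {ω | T (fun j => p j ω) ≤ x} ≤ ENNReal.ofReal x)
    (ν : Measure ℝ) [IsProbabilityMeasure ν] (hν : ν {x : ℝ | x ≤ 0} = 0)
    (β : ℝ → ℝ) (hβ : ∀ r, β r = ∫ x in Set.Ioc (0:ℝ) r, x ∂ν)
    (c : ℝ) (hc : 0 < c)
    (f : (Fin m → ℝ) → ℝ) (hf_nonneg : ∀ v, 0 ≤ f v) :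
    ∫ ω, (if T (fun j => p j ω) ≤ c * β (f (fun j => p j ω))
          then (c * f (fun j => p j ω))⁻¹ else 0) ∂μ ≤ 1 := by
  -- abbreviations
  set U : Ω → ℝ := fun ω => T (fun j => p j ω) with hU
  set F : Ω → ℝ := fun ω => f (fun j => p j ω) with hF
  set g : Ω → ℝ := fun ω => if U ω ≤ c * β (F ω) then (c * F ω)⁻¹ else 0 with hg
  -- basic facts about β
  have hint : ∀ r : ℝ, IntegrableOn (fun x : ℝ => x) (Set.Ioc 0 r) ν := by
    intro r
    refine Measure.integrableOn_of_bounded (measure_ne_top ν _) aestronglyMeasurable_id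
      (M := max r 0) ?_
    filter_upwards [ae_restrict_mem measurableSet_Ioc] with x hx
    rw [Real.norm_eq_abs, abs_of_pos hx.1]
    exact le_max_of_le_left hx.2
  have hβ_nonneg : ∀ r, 0 ≤ β r := by
    intro r
    rw [hβ]
    exact setIntegral_nonneg measurableSet_Ioc (fun x hx => le_of_lt hx.1)
  have hβ_mono : ∀ r₁ r₂ : ℝ, r₁ ≤ r₂ → β r₁ ≤ β r₂ := by
    intro r₁ r₂ h
    rw [hβ, hβ]
    refine setIntegral_mono_set (hint r₂) ?_ (Filter.Eventually.of_forall ?_)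
    · filter_upwards [ae_restrict_mem measurableSet_Ioc] with x hx using le_of_lt hx.1
    · exact Set.Ioc_subset_Ioc_right h
  have hg_nonneg : ∀ ω, 0 ≤ g ω := by
    intro ω
    rw [hg]
    dsimp only
    split
    · exact inv_nonneg.mpr (mul_nonneg hc.le (hf_nonneg _))
    · exact le_refl 0
  by_cases hInt : Integrable g μ
  swap
  · rw [integral_undef hInt]; norm_num
  rw [integral_eq_lintegral_of_nonneg_ae (Filter.Eventually.of_forall hg_nonneg)
    hInt.aestronglyMeasurable]
  have key : ∫⁻ ω, ENNReal.ofReal (g ω) ∂μ ≤ 1 := by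
    rw [lintegral_eq_lintegral_meas_lt μ (Filter.Eventually.of_forall hg_nonneg)
      hInt.aestronglyMeasurable.aemeasurable]
    -- bound the level sets
    have hlevel : ∀ t ∈ Set.Ioi (0:ℝ),
        μ {a | t < g a} ≤ ENNReal.ofReal (c * β (1 / (c * t))) := by
      intro t ht
      have ht : 0 < t := ht
      have hsub : {a | t < g a} ⊆ {ω | U ω ≤ c * β (1 / (c * t))} := by
        intro ω hω
        have hgt : t < g ω := hω
        rw [hg] at hgt
        dsimp only at hgt
        by_cases hcase : U ω ≤ c * β (F ω)
        · rw [if_pos hcase] at hgt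
          have hFpos : 0 < F ω := by
            by_contra h
            push_neg at h
            have : F ω = 0 := le_antisymm h (hf_nonneg _)
            rw [this] at hgt
            simp at hgt
            linarith
          have hcF : 0 < c * F ω := by positivity
          have : F ω < 1 / (c * t) := by
            rw [lt_div_iff₀ (by positivity)]
            have h1 : t * (c * F ω) < (c * F ω)⁻¹ * (c * F ω) :=
              mul_lt_mul_of_pos_right hgt hcF
            rw [inv_mul_cancel₀ (ne_of_gt hcF)] at h1
            nlinarith
          have hb := hβ_mono _ _ this.le
          exact Set.mem_setOf.mpr (hcase.trans (by nlinarith))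
        · rw [if_neg hcase] at hgt; linarith
      refine le_trans (measure_mono hsub) ?_
      set b := c * β (1 / (c * t)) with hb
      have hb0 : 0 ≤ b := mul_nonneg hc.le (hβ_nonneg _)
      by_cases hb1 : b ≤ 1
      · exact hT_super b ⟨hb0, hb1⟩
      · calc μ {ω | U ω ≤ b} ≤ 1 := prob_le_one
          _ ≤ ENNReal.ofReal b := by
              rw [show (1:ENNReal) = ENNReal.ofReal 1 by simp]
              exact ENNReal.ofReal_le_ofReal (le_of_not_ge hb1)
    refine le_trans (lintegral_mono_ae ((ae_restrict_mem measurableSet_Ioi).mono hlevel)) ?_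
    -- now bound ∫⁻ t in Ioi 0, ofReal (c * β (1/(c*t))) dt ≤ 1
    have step2 : ∀ t : ℝ, ENNReal.ofReal (c * β (1 / (c * t)))
        ≤ ∫⁻ x in Set.Ioc (0:ℝ) (1 / (c * t)), ENNReal.ofReal (c * x) ∂ν := by
      intro t
      have : c * β (1 / (c * t)) = ∫ x in Set.Ioc (0:ℝ) (1 / (c * t)), c * x ∂ν := by
        rw [hβ, ← integral_const_mul]
      rw [this, ofReal_integral_eq_lintegral_ofReal ((hint _).const_mul c) ?_]
      filter_upwards [ae_restrict_mem measurableSet_Ioc] with x hx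
      exact mul_nonneg hc.le (le_of_lt hx.1)
    refine le_trans (lintegral_mono_ae (Filter.Eventually.of_forall fun t => step2 t)) ?_
    -- rewrite as a double integral over the product and swap
    set K : Set (ℝ × ℝ) := {q : ℝ × ℝ | 0 < q.1 ∧ 0 < q.2 ∧ c * q.1 * q.2 ≤ 1} with hK
    have hKmeas : MeasurableSet K := by
      apply MeasurableSet.inter (measurableSet_lt measurable_const measurable_fst)
      apply MeasurableSet.inter (measurableSet_lt measurable_const measurable_snd)
      exact measurableSet_le ((measurable_fst.const_mul c).mul measurable_snd) measurable_const
    set Φ : ℝ × ℝ → ENNReal := K.indicator (fun q => ENNReal.ofReal (c * q.2)) with hΦ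
    have hΦmeas : Measurable Φ :=
      (ENNReal.measurable_ofReal.comp (measurable_snd.const_mul c)).indicator hKmeas
    have eq1 : (∫⁻ t in Set.Ioi (0:ℝ),
        ∫⁻ x in Set.Ioc (0:ℝ) (1 / (c * t)), ENNReal.ofReal (c * x) ∂ν)
        = ∫⁻ t : ℝ, ∫⁻ x : ℝ, Φ (t, x) ∂ν := by
      rw [← lintegral_indicator measurableSet_Ioi]
      congr 1
      ext t
      by_cases ht : 0 < t
      · rw [Set.indicator_of_mem (Set.mem_Ioi.mpr ht), ← lintegral_indicator measurableSet_Ioc]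
        congr 1
        ext x
        rw [hΦ]
        by_cases hx : x ∈ Set.Ioc (0:ℝ) (1 / (c * t))
        · rw [Set.indicator_of_mem hx, Set.indicator_of_mem]
          exact ⟨ht, hx.1, by
            have := hx.2
            rw [le_div_iff₀ (by positivity)] at this
            nlinarith⟩
        · rw [Set.indicator_of_notMem hx, Set.indicator_of_notMem]
          intro hmem
          exact hx ⟨hmem.2.1, by
            rw [le_div_iff₀ (by positivity)]
            nlinarith [hmem.2.2]⟩
      · rw [Set.indicator_of_notMem (fun h => ht (Set.mem_Ioi.mp h))]
        symm
        rw [← lintegral_zero (μ := ν)]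
        congr 1
        ext x
        rw [hΦ, Set.indicator_of_notMem]
        intro hmem
        exact ht hmem.1
    rw [eq1]
    have hswap : AEMeasurable (Function.uncurry fun t x => Φ (t, x))
        ((volume : Measure ℝ).prod ν) :=
      (hΦmeas.comp (measurable_fst.prodMk measurable_snd)).aemeasurable
    rw [lintegral_lintegral_swap hswap]
    have eq2 : ∀ x : ℝ, (∫⁻ t : ℝ, Φ (t, x)) = Set.indicator (Set.Ioi (0:ℝ)) (fun _ => 1) x := by
      intro x
      by_cases hx : 0 < x
      · rw [Set.indicator_of_mem (Set.mem_Ioi.mpr hx)]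
        have : ∀ t : ℝ, Φ (t, x)
            = (Set.Ioc (0:ℝ) (1 / (c * x))).indicator (fun _ => ENNReal.ofReal (c * x)) t := by
          intro t
          rw [hΦ]
          by_cases ht : t ∈ Set.Ioc (0:ℝ) (1 / (c * x))
          · rw [Set.indicator_of_mem ht, Set.indicator_of_mem]
            exact ⟨ht.1, hx, by
              have := ht.2
              rw [le_div_iff₀ (by positivity)] at this
              nlinarith⟩
          · rw [Set.indicator_of_notMem ht, Set.indicator_of_notMem]
            intro hmem
            exact ht ⟨hmem.1, by
              rw [le_div_iff₀ (by positivity)]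
              nlinarith [hmem.2.2]⟩
        simp only [this]
        rw [lintegral_indicator measurableSet_Ioc, setLIntegral_const,
          Real.volume_Ioc]
        have hcx : 0 < c * x := by positivity
        rw [← ENNReal.ofReal_mul hcx.le]
        rw [show c * x * (1 / (c * x) - 0) = 1 by rw [sub_zero, mul_one_div_cancel hcx.ne']]
        simp
      · rw [Set.indicator_of_notMem (fun h => hx (Set.mem_Ioi.mp h))]
        rw [← lintegral_zero (μ := (volume : Measure ℝ))]
        congr 1
        ext t
        rw [hΦ, Set.indicator_of_notMem]
        intro hmem
        exact hx hmem.2.1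
    simp only [eq2]
    rw [lintegral_indicator measurableSet_Ioi, setLIntegral_const, one_mul]
    have : ν (Set.Ioi (0:ℝ)) = 1 := by
      have h0 : ν (Set.Iic (0:ℝ)) = 0 := hν
      rw [← Set.compl_Iic, measure_compl measurableSet_Iic (measure_ne_top ν _), h0]
      simp
    rw [this]
  calc (∫⁻ ω, ENNReal.ofReal (g ω) ∂μ).toReal ≤ (1 : ENNReal).toReal :=
        ENNReal.toReal_mono (by norm_num) key
    _ = 1 := by simp
end

section
/- Let p_1,…,p_n be independent with P(p_j ≤ u) ≤ u for all j in a group of indices whose null subset is nonempty. Let π̂_{0,j} = (1 + Σ_{i≠j} 1{p_i > λ})/((1−λ)n) for fixed λ ∈ (0,1). Then for each null index j, E[1/π̂_{0,j}] ≤ n/n_0, where n_0 is the number of null indices in the group. -/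
open MeasureTheory ProbabilityTheory Finset intervalIntegral
open scoped Classical

noncomputable def stoC (lam : ℝ) (m k : ℕ) : ℝ :=
  ∫ t in (0:ℝ)..1, t ^ m * (lam + (1 - lam) * t) ^ k

lemma stoC_intble (lam : ℝ) (m k : ℕ) :
    IntervalIntegrable (fun t : ℝ => t ^ m * (lam + (1 - lam) * t) ^ k) volume 0 1 :=
  (Continuous.mul (continuous_pow m) ((continuous_const.add (continuous_const.mul continuous_id)).pow k)).intervalIntegrable 0 1

lemma stoC_nonneg {lam : ℝ} (hlam : lam ∈ Set.Ioo (0:ℝ) 1) (m k : ℕ) :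
    0 ≤ stoC lam m k :=
  intervalIntegral.integral_nonneg zero_le_one fun t ht => mul_nonneg (pow_nonneg ht.1 m)
    (pow_nonneg (add_nonneg hlam.1.le (mul_nonneg (by linarith [hlam.2]) ht.1)) k)

lemma stoC_zero (lam : ℝ) (m : ℕ) : stoC lam m 0 = ((m : ℝ) + 1)⁻¹ := by
  simp only [stoC, pow_zero, mul_one, integral_pow]

  rw [one_pow]
  simp [div_eq_mul_inv]

lemma stoC_anti {lam : ℝ} (hlam : lam ∈ Set.Ioo (0:ℝ) 1) (m k : ℕ) :
    stoC lam (m + 1) k ≤ stoC lam m k := by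
  apply intervalIntegral.integral_mono_on zero_le_one (stoC_intble _ _ _) (stoC_intble _ _ _)
  intro t ht
  have h1 : (0:ℝ) ≤ lam + (1 - lam) * t :=
    add_nonneg hlam.1.le (mul_nonneg (by linarith [hlam.2]) ht.1)
  have h2 : t ^ (m + 1) ≤ t ^ m := pow_le_pow_of_le_one ht.1 ht.2 (Nat.le_succ m)
  exact mul_le_mul_of_nonneg_right h2 (pow_nonneg h1 k)

lemma stoC_rec (lam : ℝ) (m k : ℕ) :
    stoC lam m (k + 1) = lam * stoC lam m k + (1 - lam) * stoC lam (m + 1) k := by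
  unfold stoC
  rw [← intervalIntegral.integral_const_mul, ← intervalIntegral.integral_const_mul,
    ← intervalIntegral.integral_add ((stoC_intble lam m k).const_mul lam)
      ((stoC_intble lam (m+1) k).const_mul (1 - lam))]
  apply intervalIntegral.integral_congr
  intro t _
  ring

lemma stoC_bound {lam : ℝ} (hlam : lam ∈ Set.Ioo (0:ℝ) 1) (k : ℕ) :
    (1 - lam) * ((k : ℝ) + 1) * stoC lam 0 k ≤ 1 := by
  have hderiv : ∀ t ∈ Set.uIcc (0:ℝ) 1, HasDerivAt (fun t : ℝ => (lam + (1 - lam) * t) ^ (k + 1))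
      (((k:ℝ) + 1) * (lam + (1 - lam) * t) ^ k * (1 - lam)) t := by
    intro t _
    have inner : HasDerivAt (fun t : ℝ => lam + (1 - lam) * t) (1 - lam) t := by
      simpa using ((hasDerivAt_id t).const_mul (1 - lam)).const_add lam
    have := inner.fun_pow (k + 1)
    simpa using this
  have hint : IntervalIntegrable
      (fun t : ℝ => ((k:ℝ) + 1) * (lam + (1 - lam) * t) ^ k * (1 - lam)) volume 0 1 := by
    apply Continuous.intervalIntegrable
    exact (continuous_const.mul (((continuous_const.add (continuous_const.mul continuous_id)).pow k))).mul continuous_const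
  have hFTC := intervalIntegral.integral_eq_sub_of_hasDerivAt hderiv hint
  have heq : (1 - lam) * ((k : ℝ) + 1) * stoC lam 0 k
      = ∫ t in (0:ℝ)..1, ((k:ℝ) + 1) * (lam + (1 - lam) * t) ^ k * (1 - lam) := by
    rw [stoC, ← intervalIntegral.integral_const_mul]
    apply intervalIntegral.integral_congr
    intro t _
    ring
  rw [heq, hFTC]
  have : (0:ℝ) ≤ lam ^ (k + 1) := pow_nonneg hlam.1.le _
  have h1 : lam + (1 - lam) * 1 = 1 := by ring
  rw [h1]
  simp
  linarith

lemma count_cast_eq {Ω : Type*} {ι : Type*} (s : Finset ι) (P : ι → Ω → Prop) (ω : Ω) :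
    (((s.filter fun i => P i ω).card : ℕ) : ℝ) = ∑ i ∈ s, if P i ω then (1:ℝ) else 0 := by
  rw [Finset.card_filter]
  push_cast
  simp [apply_ite (Nat.cast : ℕ → ℝ)]

lemma count_meas {Ω : Type*} [MeasurableSpace Ω] {ι : Type*} (s : Finset ι) (P : ι → Ω → Prop)
    (hP : ∀ i, MeasurableSet {ω | P i ω}) :
    Measurable fun ω => (((s.filter fun i => P i ω).card : ℕ) : ℝ) := by
  have : (fun ω => (((s.filter fun i => P i ω).card : ℕ) : ℝ))
      = fun ω => ∑ i ∈ s, if P i ω then (1:ℝ) else 0 := funext fun ω => count_cast_eq s P ω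
  rw [this]
  exact Finset.measurable_sum _ fun i _ => Measurable.ite (hP i) measurable_const measurable_const

lemma integrable_of_bdd {Ω : Type*} [MeasurableSpace Ω] {μ : Measure Ω} [IsFiniteMeasure μ]
    {f : Ω → ℝ} (hf : Measurable f) {C : ℝ} (h : ∀ ω, |f ω| ≤ C) : Integrable f μ :=
  (integrable_const C).mono' hf.aestronglyMeasurable (Filter.Eventually.of_forall h)

lemma storey_key {Ω : Type*} [MeasurableSpace Ω] (μ : Measure Ω) [IsProbabilityMeasure μ]
    {n : ℕ} {p : Fin n → Ω → ℝ} (hmeas : ∀ i, Measurable (p i))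
    (hindep : iIndepFun p μ)
    {lam : ℝ} (hlam : lam ∈ Set.Ioo (0:ℝ) 1) (T : Finset (Fin n)) :
    (∀ i ∈ T, ENNReal.ofReal (1 - lam) ≤ μ {ω | lam < p i ω}) → ∀ m : ℕ,
    ∫ ω, ((m : ℝ) + 1 + (((T.filter fun i => lam < p i ω).card : ℕ) : ℝ))⁻¹ ∂μ
      ≤ stoC lam m T.card := by
  induction T using Finset.induction_on with
  | empty =>
    intro _ m
    simp only [Finset.filter_empty, Finset.card_empty, Nat.cast_zero, add_zero]
    rw [MeasureTheory.integral_const, probReal_univ, one_smul, stoC_zero]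
  | @insert a s ha ih =>
    intro hT m
    have hTs : ∀ i ∈ s, ENNReal.ofReal (1 - lam) ≤ μ {ω | lam < p i ω} :=
      fun i hi => hT i (Finset.mem_insert_of_mem hi)
    set cnt : Ω → ℝ := fun ω => (((s.filter fun i => lam < p i ω).card : ℕ) : ℝ) with hcnt
    have hcntmeas : Measurable cnt :=
      count_meas s _ fun i => measurableSet_lt measurable_const (hmeas i)
    have hcnt0 : ∀ ω, 0 ≤ cnt ω := fun ω => Nat.cast_nonneg _
    set u : Ω → ℝ := fun ω => ((m : ℝ) + 2 + cnt ω)⁻¹ with hu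
    set v : Ω → ℝ := fun ω => ((m : ℝ) + 1 + cnt ω)⁻¹ with hv
    set g : Ω → ℝ := fun ω => if lam < p a ω then (1:ℝ) else 0 with hg
    set g' : Ω → ℝ := fun ω => if lam < p a ω then (0:ℝ) else 1 with hg'
    have humeas : Measurable u := ((hcntmeas.const_add _)).inv
    have hvmeas : Measurable v := ((hcntmeas.const_add _)).inv
    have hA : MeasurableSet {ω | lam < p a ω} := measurableSet_lt measurable_const (hmeas a)
    have hgmeas : Measurable g := Measurable.ite hA measurable_const measurable_const
    have hg'meas : Measurable g' := Measurable.ite hA measurable_const measurable_const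
    have hub : ∀ ω, 0 < (m : ℝ) + 2 + cnt ω := fun ω => by
      have := hcnt0 ω; positivity
    have hvb : ∀ ω, 0 < (m : ℝ) + 1 + cnt ω := fun ω => by
      have := hcnt0 ω; positivity
    have hu01 : ∀ ω, 0 ≤ u ω ∧ u ω ≤ 1 := fun ω => by
      constructor
      · exact le_of_lt (inv_pos.mpr (hub ω))
      · rw [hu]
        have := hcnt0 ω
        rw [inv_le_one_iff₀]
        right; linarith
    have hv01 : ∀ ω, 0 ≤ v ω ∧ v ω ≤ 1 := fun ω => by
      constructor
      · exact le_of_lt (inv_pos.mpr (hvb ω))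
      · rw [hv]
        have := hcnt0 ω
        rw [inv_le_one_iff₀]
        right; linarith
    -- pointwise decomposition
    have hpt : (fun ω => ((m : ℝ) + 1 + ((((insert a s).filter fun i => lam < p i ω).card : ℕ) : ℝ))⁻¹)
        = fun ω => g ω * u ω + g' ω * v ω := by
      funext ω
      by_cases h : lam < p a ω
      · have hans : a ∉ s.filter fun i => lam < p i ω := fun hc => ha (Finset.mem_of_mem_filter a hc)
        rw [Finset.filter_insert, if_pos h, Finset.card_insert_of_notMem hans]
        simp only [hg, hg', hu, hv, if_pos h, one_mul, zero_mul, add_zero]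
        push_cast
        ring_nf
        rfl
      · rw [Finset.filter_insert, if_neg h]
        simp only [hg, hg', hu, hv, if_neg h, one_mul, zero_mul, zero_add]
        rfl
    rw [hpt]
    -- integrability
    have higu : Integrable (fun ω => g ω * u ω) μ := by
      apply integrable_of_bdd (hgmeas.mul humeas) (C := 1)
      intro ω
      rw [Pi.mul_apply, abs_mul]
      have h1 := hu01 ω
      calc |g ω| * |u ω| ≤ 1 * 1 := by
            apply mul_le_mul _ (abs_le.mpr ⟨by linarith [h1.1], h1.2⟩) (abs_nonneg _) zero_le_one
            by_cases h : lam < p a ω <;> simp [hg, h]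
        _ = 1 := mul_one 1
    have higv : Integrable (fun ω => g' ω * v ω) μ := by
      apply integrable_of_bdd (hg'meas.mul hvmeas) (C := 1)
      intro ω
      rw [Pi.mul_apply, abs_mul]
      have h1 := hv01 ω
      calc |g' ω| * |v ω| ≤ 1 * 1 := by
            apply mul_le_mul _ (abs_le.mpr ⟨by linarith [h1.1], h1.2⟩) (abs_nonneg _) zero_le_one
            by_cases h : lam < p a ω <;> simp [hg', h]
        _ = 1 := mul_one 1
    rw [integral_add higu higv]
    -- independence
    have hdisj : Disjoint ({a} : Finset (Fin n)) s := Finset.disjoint_singleton_left.mpr ha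
    have base := hindep.indepFun_finset {a} s hdisj hmeas
    have hφmeas : Measurable fun w : (({a} : Finset (Fin n)) → ℝ) =>
        if lam < w ⟨a, Finset.mem_singleton_self a⟩ then (1:ℝ) else 0 :=
      Measurable.ite (measurableSet_lt measurable_const (measurable_pi_apply _))
        measurable_const measurable_const
    have hφ'meas : Measurable fun w : (({a} : Finset (Fin n)) → ℝ) =>
        if lam < w ⟨a, Finset.mem_singleton_self a⟩ then (0:ℝ) else 1 :=
      Measurable.ite (measurableSet_lt measurable_const (measurable_pi_apply _))
        measurable_const measurable_const
    have hsum_meas : Measurable fun w : ({x // x ∈ s} → ℝ) =>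
        ∑ i : {x // x ∈ s}, if lam < w i then (1:ℝ) else 0 :=
      Finset.measurable_sum _ fun i _ =>
        Measurable.ite (measurableSet_lt measurable_const (measurable_pi_apply _))
          measurable_const measurable_const
    have hψmeas : Measurable fun w : ({x // x ∈ s} → ℝ) =>
        ((m : ℝ) + 2 + ∑ i : {x // x ∈ s}, if lam < w i then (1:ℝ) else 0)⁻¹ :=
      (hsum_meas.const_add _).inv
    have hψ'meas : Measurable fun w : ({x // x ∈ s} → ℝ) =>
        ((m : ℝ) + 1 + ∑ i : {x // x ∈ s}, if lam < w i then (1:ℝ) else 0)⁻¹ :=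
      (hsum_meas.const_add _).inv
    have hcnt_eq : ∀ ω, cnt ω = ∑ i : {x // x ∈ s}, if lam < p i ω then (1:ℝ) else 0 := by
      intro ω
      show (((s.filter fun i => lam < p i ω).card : ℕ) : ℝ) = _
      rw [Finset.sum_coe_sort s fun i => if lam < p i ω then (1:ℝ) else 0]
      exact count_cast_eq s (fun i ω => lam < p i ω) ω
    have hindgu : IndepFun g u μ := by
      have := base.comp hφmeas hψmeas
      convert this using 1
      rfl
      funext ω
      show u ω = _
      simp only [hu, Function.comp_apply]
      rw [hcnt_eq ω]
    have hindgv : IndepFun g' v μ := by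
      have := base.comp hφ'meas hψ'meas
      convert this using 1
      rfl
      funext ω
      show v ω = _
      simp only [hv, Function.comp_apply]
      rw [hcnt_eq ω]
    rw [show (fun ω => g ω * u ω) = g * u from rfl, show (fun ω => g' ω * v ω) = g' * v from rfl]
    rw [hindgu.integral_mul_eq_mul_integral hgmeas.aestronglyMeasurable humeas.aestronglyMeasurable,
      hindgv.integral_mul_eq_mul_integral hg'meas.aestronglyMeasurable hvmeas.aestronglyMeasurable]
    -- compute ∫ g and ∫ g'
    set q : ℝ := (μ {ω | lam < p a ω}).toReal with hq
    have hgint : ∫ ω, g ω ∂μ = q := by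
      rw [show g = Set.indicator {ω | lam < p a ω} (fun _ => (1:ℝ)) from funext fun ω => by
        rw [hg, Set.indicator_apply]; rfl]
      rw [MeasureTheory.integral_indicator hA]
      simp
      rfl
    have hg'int : ∫ ω, g' ω ∂μ = 1 - q := by
      rw [show g' = Set.indicator {ω | lam < p a ω}ᶜ (fun _ => (1:ℝ)) from funext fun ω => by
        rw [hg', Set.indicator_apply]
        by_cases h : lam < p a ω <;> simp [h]]
      rw [MeasureTheory.integral_indicator hA.compl]
      simp only [MeasureTheory.setIntegral_const, smul_eq_mul, mul_one]
      unfold Measure.real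
      rw [measure_compl hA (measure_ne_top μ _), measure_univ]
      rw [ENNReal.toReal_sub_of_le prob_le_one (by simp)]
      simp [hq]
    rw [hgint, hg'int]
    -- bounds on q
    have hq1 : 1 - lam ≤ q := by
      have := hT a (Finset.mem_insert_self a s)
      rw [hq]
      exact (ENNReal.ofReal_le_iff_le_toReal (measure_ne_top μ _)).mp this
    have hq2 : q ≤ 1 := by
      rw [hq]
      exact ENNReal.toReal_le_of_le_ofReal zero_le_one (by simpa using prob_le_one)
    -- apply IH
    have hIu : ∫ ω, u ω ∂μ ≤ stoC lam (m + 1) s.card := by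
      have := ih hTs (m + 1)
      have heq : (fun ω => ((((m:ℕ) + 1 : ℕ) : ℝ) + 1 + (((s.filter fun i => lam < p i ω).card : ℕ) : ℝ))⁻¹) = u := by
        funext ω
        rw [hu]
        push_cast
        ring_nf
        rfl
      rwa [heq] at this
    have hIv : ∫ ω, v ω ∂μ ≤ stoC lam m s.card := ih hTs m
    have hIuv : ∫ ω, u ω ∂μ ≤ ∫ ω, v ω ∂μ := by
      apply integral_mono (integrable_of_bdd humeas (C := 1) fun ω =>
          abs_le.mpr ⟨by linarith [(hu01 ω).1], (hu01 ω).2⟩)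
        (integrable_of_bdd hvmeas (C := 1) fun ω =>
          abs_le.mpr ⟨by linarith [(hv01 ω).1], (hv01 ω).2⟩)
      intro ω
      rw [hu, hv]
      apply inv_anti₀ (hvb ω)
      linarith
    rw [Finset.card_insert_of_notMem ha, stoC_rec]
    have h1 : (0:ℝ) < lam := hlam.1
    have h2 : lam < 1 := hlam.2
    nlinarith [mul_nonneg (sub_nonneg.mpr hq1) (sub_nonneg.mpr hIuv),
      mul_le_mul_of_nonneg_left hIv h1.le,
      mul_le_mul_of_nonneg_left hIu (by linarith : (0:ℝ) ≤ 1 - lam)]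

set_option maxHeartbeats 1000000 in
/-- Corollary 13 of Blanchard–Roquain (2009): for independent p-values with superuniform
nulls, Storey's leave-one-out estimator `π̂_{0,j} = (1 + Σ_{i≠j} 1{p_i > λ})/((1−λ)n)`
satisfies `E[1/π̂_{0,j}] ≤ n/n_0` for each null index `j`, where `n_0` is the number
of null indices in the group. -/
theorem storey_leave_one_out_bound
    {Ω : Type*} [MeasurableSpace Ω] (μ : Measure Ω) [IsProbabilityMeasure μ]
    (n : ℕ) (p : Fin n → Ω → ℝ) (hmeas : ∀ i, Measurable (p i))
    (hrange : ∀ i ω, p i ω ∈ Set.Icc (0:ℝ) 1)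
    (hindep : iIndepFun p μ)
    (N : Finset (Fin n))
    (hnull : ∀ i ∈ N, ∀ t ∈ Set.Icc (0:ℝ) 1, μ {ω | p i ω ≤ t} ≤ ENNReal.ofReal t)
    (j : Fin n) (hj : j ∈ N)
    (lam : ℝ) (hlam : lam ∈ Set.Ioo (0:ℝ) 1) :
    ∫ ω, ((1 + ((univ.filter fun i => i ≠ j ∧ lam < p i ω).card : ℝ))
          / ((1 - lam) * (n : ℝ)))⁻¹ ∂μ ≤ (n : ℝ) / (N.card : ℝ) := by
  have hn : 0 < n := j.pos
  have hn0 : 0 < N.card := Finset.card_pos.mpr ⟨j, hj⟩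
  have hl1 : (0:ℝ) < lam := hlam.1
  have hl2 : lam < 1 := hlam.2
  set c : ℝ := (1 - lam) * n with hc
  have hnpos : (0:ℝ) < (n : ℝ) := by exact_mod_cast hn
  have hcpos : 0 < c := by
    rw [hc]; nlinarith
  -- the null tail condition
  have hT : ∀ i ∈ N.erase j, ENNReal.ofReal (1 - lam) ≤ μ {ω | lam < p i ω} := by
    intro i hi
    have hiN : i ∈ N := Finset.mem_of_mem_erase hi
    have hset : {ω | lam < p i ω} = {ω | p i ω ≤ lam}ᶜ := by
      ext ω; simp [not_le]
    have hms : MeasurableSet {ω | p i ω ≤ lam} := measurableSet_le (hmeas i) measurable_const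
    rw [hset, measure_compl hms (measure_ne_top μ _), measure_univ]
    have h1 : μ {ω | p i ω ≤ lam} ≤ ENNReal.ofReal lam :=
      hnull i hiN lam ⟨hl1.le, hl2.le⟩
    calc ENNReal.ofReal (1 - lam) = 1 - ENNReal.ofReal lam := by
          rw [ENNReal.ofReal_sub 1 hl1.le, ENNReal.ofReal_one]
      _ ≤ 1 - μ {ω | p i ω ≤ lam} := tsub_le_tsub_left h1 1
  have hkey := storey_key μ hmeas hindep hlam (N.erase j) hT 0
  simp only [Nat.cast_zero, zero_add] at hkey
  -- measurable counting functions
  have hBmeas : Measurable fun ω =>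
      (((univ.filter fun i => i ≠ j ∧ lam < p i ω).card : ℕ) : ℝ) := by
    have h1 : (fun ω => (((univ.filter fun i => i ≠ j ∧ lam < p i ω).card : ℕ) : ℝ))
        = fun ω => ∑ i ∈ univ, if i ≠ j ∧ lam < p i ω then (1:ℝ) else 0 := by
      funext ω
      rw [Finset.card_filter]
      push_cast
      simp [apply_ite (Nat.cast : ℕ → ℝ)]
    rw [h1]
    apply Finset.measurable_sum
    intro i _
    by_cases h : i = j
    · simp [h]
    · have : (fun ω => if i ≠ j ∧ lam < p i ω then (1:ℝ) else 0)
          = fun ω => if lam < p i ω then (1:ℝ) else 0 := by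
        funext ω; simp [h]
      rw [this]
      exact Measurable.ite (measurableSet_lt measurable_const (hmeas i)) measurable_const
        measurable_const
  have hB'meas : Measurable fun ω =>
      ((((N.erase j).filter fun i => lam < p i ω).card : ℕ) : ℝ) :=
    count_meas _ _ fun i => measurableSet_lt measurable_const (hmeas i)
  set B : Ω → ℝ := fun ω => (((univ.filter fun i => i ≠ j ∧ lam < p i ω).card : ℕ) : ℝ) with hB
  set B' : Ω → ℝ := fun ω => ((((N.erase j).filter fun i => lam < p i ω).card : ℕ) : ℝ) with hB'
  have hB0 : ∀ ω, 0 ≤ B ω := fun ω => Nat.cast_nonneg _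
  have hB'0 : ∀ ω, 0 ≤ B' ω := fun ω => Nat.cast_nonneg _
  have hBB' : ∀ ω, B' ω ≤ B ω := by
    intro ω
    have hsub : ((N.erase j).filter fun i => lam < p i ω)
        ⊆ (univ.filter fun i => i ≠ j ∧ lam < p i ω) := by
      intro i hi
      simp only [Finset.mem_filter, Finset.mem_erase, Finset.mem_univ] at hi ⊢
      exact ⟨trivial, hi.1.1, hi.2⟩
    exact Nat.cast_le.mpr (Finset.card_le_card hsub)
  -- pointwise bound
  have hfmeas : Measurable fun ω => ((1 + B ω) / c)⁻¹ :=
    (((hBmeas.const_add 1)).div_const c).inv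
  have hfpt : ∀ ω, ((1 + B ω) / c)⁻¹ ≤ c * (1 + B' ω)⁻¹ := by
    intro ω
    rw [inv_div, div_eq_mul_inv]
    apply mul_le_mul_of_nonneg_left _ hcpos.le
    apply inv_anti₀ (by linarith [hB'0 ω])
    linarith [hBB' ω]
  have hfint : Integrable (fun ω => ((1 + B ω) / c)⁻¹) μ := by
    apply integrable_of_bdd hfmeas (C := c)
    intro ω
    rw [abs_of_nonneg (by positivity)]
    rw [inv_div]
    rw [div_le_iff₀ (by linarith [hB0 ω])]
    nlinarith [hB0 ω, hcpos]
  have hgint : Integrable (fun ω => c * (1 + B' ω)⁻¹) μ := by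
    apply integrable_of_bdd (measurable_const.mul ((hB'meas.const_add 1).inv)) (C := c)
    intro ω
    show |c * (1 + B' ω)⁻¹| ≤ c
    rw [abs_of_nonneg (by positivity)]
    have hle1 : (1 + B' ω)⁻¹ ≤ 1 := by
      rw [inv_le_one_iff₀]; right; linarith [hB'0 ω]
    nlinarith [hB'0 ω, hcpos, hle1]
  calc ∫ ω, ((1 + B ω) / c)⁻¹ ∂μ ≤ ∫ ω, c * (1 + B' ω)⁻¹ ∂μ :=
        integral_mono hfint hgint hfpt
    _ = c * ∫ ω, (1 + B' ω)⁻¹ ∂μ := integral_const_mul c _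
    _ ≤ c * stoC lam 0 (N.erase j).card := by
        apply mul_le_mul_of_nonneg_left _ hcpos.le
        exact hkey
    _ ≤ (n : ℝ) / (N.card : ℝ) := by
        have hcard : ((N.erase j).card : ℝ) + 1 = (N.card : ℝ) := by
          exact_mod_cast Finset.card_erase_add_one hj
        have hbd := stoC_bound hlam (N.erase j).card
        rw [hcard] at hbd
        have hstoCpos : 0 ≤ stoC lam 0 (N.erase j).card := stoC_nonneg hlam 0 _
        have hNpos : (0:ℝ) < (N.card : ℝ) := by exact_mod_cast hn0
        rw [hc, div_eq_mul_inv, show (1 - lam) * (n:ℝ) * stoC lam 0 (N.erase j).card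
            = (n:ℝ) * ((1 - lam) * stoC lam 0 (N.erase j).card) by ring]
        apply mul_le_mul_of_nonneg_left _ hnpos.le
        rw [inv_eq_one_div, le_div_iff₀ hNpos]
        nlinarith [hbd]
end
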